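/- Let u ∈ ℂ^n with ‖u‖ = 1, let k ∈ [n] and 0 < ξ ≤ 1 with ‖u‖_[k] ≥ ξ, and let t be a real number with 0 ≤ t ≤ ξ/√(2k). Then Σ_{j : |u_j| ≥ t} |u_j|² ≥ ξ²/2; in particular, ‖Π_J u‖ ≥ ξ/√2 for J := {j ∈ [n] : |u_j| ≥ t}. -/

import Mathlib

open scoped BigOperators
noncomputable section
open Classical

/-- The ℓ₂ norm of a vector in ℂ^n. -/
def l2norm {n : ℕ} (x : Fin n → ℂ) : ℝ := Real.sqrt (∑ i, ‖x i‖ ^ 2)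

/-- The Frobenius norm of a matrix. -/
def frobNorm {n₁ n₂ : ℕ} (X : Matrix (Fin n₁) (Fin n₂) ℂ) : ℝ :=
  Real.sqrt (∑ i, ∑ j, ‖X i j‖ ^ 2)

/-- The spectral norm (ℓ₂ operator norm) of a matrix. -/
def specNorm {n₁ n₂ : ℕ} (X : Matrix (Fin n₁) (Fin n₂) ℂ) : ℝ :=
  sSup {c : ℝ | ∃ x : Fin n₂ → ℂ, l2norm x = 1 ∧ c = l2norm (X.mulVec x)}

/-- A vector is `s`-sparse if it has at most `s` nonzero entries. -/
def Sparse {n : ℕ} (s : ℕ) (x : Fin n → ℂ) : Prop :=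
  {i | x i ≠ 0}.ncard ≤ s

/-- The linear map 𝒜 determined by the matrices A₁, …, A_m. -/
def opA {n₁ n₂ m : ℕ} (A : Fin m → Matrix (Fin n₁) (Fin n₂) ℂ)
    (X : Matrix (Fin n₁) (Fin n₂) ℂ) : Fin m → ℂ :=
  fun ℓ => ((A ℓ).conjTranspose * X).trace

/-- The adjoint 𝒜* of 𝒜 with respect to the Frobenius inner product. -/
def opAadj {n₁ n₂ m : ℕ} (A : Fin m → Matrix (Fin n₁) (Fin n₂) ℂ)
    (z : Fin m → ℂ) : Matrix (Fin n₁) (Fin n₂) ℂ :=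
  ∑ ℓ, z ℓ • A ℓ

/-- The (s₁, s₂, r)-restricted isometry property with constant δ. -/
def RIP {n₁ n₂ m : ℕ} (A : Fin m → Matrix (Fin n₁) (Fin n₂) ℂ)
    (s₁ s₂ r : ℕ) (δ : ℝ) : Prop :=
  ∀ X : Matrix (Fin n₁) (Fin n₂) ℂ, X.rank ≤ r →
    {i | X i ≠ 0}.ncard ≤ s₁ → {j | X.transpose j ≠ 0}.ncard ≤ s₂ →
    (1 - δ) * frobNorm X ^ 2 ≤ l2norm (opA A X) ^ 2 ∧
      l2norm (opA A X) ^ 2 ≤ (1 + δ) * frobNorm X ^ 2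

/-- The diagonal 0/1 projection matrix onto the coordinates in `J`. -/
def proj {n : ℕ} (J : Finset (Fin n)) : Matrix (Fin n) (Fin n) ℂ :=
  Matrix.diagonal fun i => if i ∈ J then 1 else 0

/-- The outer product u v^*. -/
def outer {n₁ n₂ : ℕ} (u : Fin n₁ → ℂ) (v : Fin n₂ → ℂ) :
    Matrix (Fin n₁) (Fin n₂) ℂ :=
  Matrix.of fun i j => u i * star (v j)

/-- The norm ‖x‖_[k] : the ℓ₂ norm of the best k-sparse approximation of x. -/
def knorm {n : ℕ} (k : ℕ) (x : Fin n → ℂ) : ℝ :=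
  sSup {c : ℝ | ∃ I : Finset (Fin n), I.card = k ∧ c = Real.sqrt (∑ i ∈ I, ‖x i‖ ^ 2)}

/-- The ℓ∞ norm of a vector. -/
def linftyNorm {n : ℕ} (x : Fin n → ℂ) : ℝ :=
  sSup {c : ℝ | ∃ i, c = ‖x i‖}

/-- The sine of the angle between two unit vectors. -/
def sinAngle {n : ℕ} (w v : Fin n → ℂ) : ℝ :=
  Real.sqrt (1 - ‖∑ i, star (w i) * v i‖ ^ 2)


/-- If a unit vector has at least ξ of its mass in its k largest entries, then the entries
of modulus at least t ≤ ξ/√(2k) carry at least ξ²/2 of its mass. -/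
theorem large_entries_capture_mass {n : ℕ} (u : Fin n → ℂ) (hu : l2norm u = 1)
    (k : ℕ) (hk1 : 1 ≤ k) (hkn : k ≤ n)
    (ξ : ℝ) (hξ0 : 0 < ξ) (hξ1 : ξ ≤ 1) (hknorm : ξ ≤ knorm k u)
    (t : ℝ) (ht0 : 0 ≤ t) (ht : t ≤ ξ / Real.sqrt (2 * k)) :
    ξ ^ 2 / 2 ≤ ∑ j ∈ Finset.univ.filter (fun j => t ≤ ‖u j‖), ‖u j‖ ^ 2 ∧
      ξ / Real.sqrt 2 ≤
        l2norm ((proj (Finset.univ.filter fun j => t ≤ ‖u j‖)).mulVec u) := by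
  -- obtain a witness Finset I attaining the sup
  obtain ⟨I, hIcard, hIξ⟩ :
      ∃ I : Finset (Fin n), I.card = k ∧ ξ ≤ Real.sqrt (∑ i ∈ I, ‖u i‖ ^ 2) := by
    set S := {c : ℝ | ∃ I : Finset (Fin n), I.card = k ∧
        c = Real.sqrt (∑ i ∈ I, ‖u i‖ ^ 2)} with hS
    have hfin : S.Finite := by
      have hsub : S ⊆ (fun I : Finset (Fin n) =>
          Real.sqrt (∑ i ∈ I, ‖u i‖ ^ 2)) '' Set.univ := by
        rintro c ⟨I, hI, rfl⟩; exact ⟨I, trivial, rfl⟩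
      exact (Set.finite_univ.image _).subset hsub
    have hne : S.Nonempty := by
      obtain ⟨I, _, hI⟩ := Finset.exists_subset_card_eq
        (show k ≤ (Finset.univ : Finset (Fin n)).card by simpa using hkn)
      exact ⟨_, I, hI, rfl⟩
    obtain ⟨I, hI, hval⟩ := hne.csSup_mem hfin
    exact ⟨I, hI, hval ▸ hknorm⟩
  have hsumnn : (0:ℝ) ≤ ∑ i ∈ I, ‖u i‖ ^ 2 :=
    Finset.sum_nonneg fun i _ => sq_nonneg _
  have hξ2 : ξ ^ 2 ≤ ∑ i ∈ I, ‖u i‖ ^ 2 := by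
    nlinarith [Real.sq_sqrt hsumnn, Real.sqrt_nonneg (∑ i ∈ I, ‖u i‖ ^ 2)]
  -- bound t²
  have hk0 : (0:ℝ) < 2 * k := by positivity
  have hs2k : Real.sqrt (2 * k) > 0 := Real.sqrt_pos.mpr hk0
  have ht2 : t ^ 2 ≤ ξ ^ 2 / (2 * k) := by
    have h1 : t ^ 2 ≤ (ξ / Real.sqrt (2 * k)) ^ 2 := by
      apply pow_le_pow_left₀ ht0 ht
    calc t ^ 2 ≤ (ξ / Real.sqrt (2 * k)) ^ 2 := h1
      _ = ξ ^ 2 / (Real.sqrt (2 * k)) ^ 2 := by ring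
      _ = ξ ^ 2 / (2 * k) := by rw [Real.sq_sqrt hk0.le]
  -- small entries of I contribute at most ξ²/2
  have hsmall : ∑ i ∈ I.filter (fun i => ¬ t ≤ ‖u i‖), ‖u i‖ ^ 2 ≤ ξ ^ 2 / 2 := by
    have h1 : ∑ i ∈ I.filter (fun i => ¬ t ≤ ‖u i‖), ‖u i‖ ^ 2 ≤
        ∑ _i ∈ I.filter (fun i => ¬ t ≤ ‖u i‖), t ^ 2 := by
      apply Finset.sum_le_sum
      intro i hi
      have : ‖u i‖ < t := by simpa using (Finset.mem_filter.mp hi).2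
      nlinarith [norm_nonneg (u i)]
    have h2 : ((I.filter (fun i => ¬ t ≤ ‖u i‖)).card : ℝ) ≤ k := by
      exact_mod_cast hIcard ▸ Finset.card_filter_le I _
    have h3 : ∑ _i ∈ I.filter (fun i => ¬ t ≤ ‖u i‖), t ^ 2 ≤ (k : ℝ) * t ^ 2 := by
      rw [Finset.sum_const, nsmul_eq_mul]
      exact mul_le_mul_of_nonneg_right h2 (sq_nonneg t)
    have h4 : (k : ℝ) * t ^ 2 ≤ (k : ℝ) * (ξ ^ 2 / (2 * k)) :=
      mul_le_mul_of_nonneg_left ht2 (by positivity)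
    have hkpos : (0:ℝ) < k := by exact_mod_cast hk1
    have h5 : (k : ℝ) * (ξ ^ 2 / (2 * k)) = ξ ^ 2 / 2 := by field_simp
    linarith
  -- the main mass bound, first restricted to I
  have hbig : ξ ^ 2 / 2 ≤ ∑ i ∈ I.filter (fun i => t ≤ ‖u i‖), ‖u i‖ ^ 2 := by
    have hsplit := Finset.sum_filter_add_sum_filter_not I (fun i => t ≤ ‖u i‖)
      (fun i => ‖u i‖ ^ 2)
    linarith
  have hJ : ξ ^ 2 / 2 ≤ ∑ j ∈ Finset.univ.filter (fun j => t ≤ ‖u j‖), ‖u j‖ ^ 2 := by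
    refine le_trans hbig (Finset.sum_le_sum_of_subset_of_nonneg ?_ ?_)
    · intro i hi
      simp only [Finset.mem_filter, Finset.mem_univ, true_and] at *
      exact hi.2
    · intro i _ _; exact sq_nonneg _
  refine ⟨hJ, ?_⟩
  -- compute the ℓ₂ norm of the projected vector
  set J := Finset.univ.filter (fun j => t ≤ ‖u j‖) with hJdef
  have hnorm : l2norm ((proj J).mulVec u) = Real.sqrt (∑ j ∈ J, ‖u j‖ ^ 2) := by
    unfold l2norm proj
    congr 1
    rw [Finset.sum_filter]
    apply Finset.sum_congr rfl
    intro i _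
    rw [Matrix.mulVec_diagonal]
    simp only [hJdef]
    split_ifs <;> simp_all [Finset.mem_filter] <;> linarith
  rw [hnorm]
  have : ξ / Real.sqrt 2 = Real.sqrt (ξ ^ 2 / 2) := by
    rw [Real.sqrt_div (sq_nonneg ξ), Real.sqrt_sq hξ0.le]
  rw [this]
  exact Real.sqrt_le_sqrt hJ

end
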